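/- Let p ≥ 2 be a prime, let L = lcm{1,2,...,p²-1}, and let A = #{x ∈ {1,...,L} : x has exactly one divisor d with 1 < d < p²}. Then lcm{1,2,...,p²} = p·L and #{x ∈ {1,...,p·L} : x has exactly one divisor d with 1 < d ≤ p²} = p·A − φ(L)/(p-1), where φ is Euler's totient function (note φ(L)/(p-1) = φ(L/p)). -/

import Mathlib

lemma pow_dvd_flcm {q k : ℕ} (hq : q.Prime) (hk : k ≠ 0) (s : Finset ℕ)
    (hs : ∀ n ∈ s, n ≠ 0) (h : q ^ k ∣ s.lcm id) : ∃ n ∈ s, q ^ k ∣ n := by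
  induction s using Finset.induction_on with
  | empty =>
    simp only [Finset.lcm_empty] at h
    have h1 := Nat.le_of_dvd one_pos h
    exact absurd (le_trans (Nat.le_self_pow hk q) h1) (not_le.2 hq.one_lt)
  | @insert a s' hx ih =>
    rw [Finset.lcm_insert] at h
    have ha : a ≠ 0 := hs a (Finset.mem_insert_self a s')
    have hs' : ∀ n ∈ s', n ≠ 0 := fun n hn => hs n (Finset.mem_insert_of_mem hn)
    have hlcm : s'.lcm id ≠ 0 := by
      rw [Ne, Finset.lcm_eq_zero_iff]
      rintro ⟨n, hn, rfl⟩
      exact hs' 0 hn rfl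
    have h2 : q ^ k ∣ Nat.lcm a (s'.lcm id) := h
    rw [hq.pow_dvd_iff_le_factorization (Nat.lcm_ne_zero ha hlcm),
      Nat.factorization_lcm ha hlcm] at h2
    simp only [Finsupp.sup_apply, le_sup_iff] at h2
    rcases h2 with h2 | h2
    · exact ⟨a, Finset.mem_insert_self a s', (hq.pow_dvd_iff_le_factorization ha).2 h2⟩
    · obtain ⟨n, hn, hd⟩ := ih hs' ((hq.pow_dvd_iff_le_factorization hlcm).2 h2)
      exact ⟨n, Finset.mem_insert_of_mem hn, hd⟩

lemma periodic_count (L : ℕ) (P : ℕ → Prop) [DecidablePred P]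
    (hP : ∀ x, P (x + L) ↔ P x) (k : ℕ) :
    ((Finset.Ioc 0 (k * L)).filter P).card = k * ((Finset.Ioc 0 L).filter P).card := by
  have key : ∀ m x, P (m * L + x) ↔ P x := by
    intro m
    induction m with
    | zero => simp
    | succ n ih => intro x; rw [add_mul, one_mul, add_right_comm, hP]; exact ih x
  induction k with
  | zero => simp
  | succ n ih =>
    have hle : n * L ≤ (n + 1) * L := Nat.mul_le_mul_right L (Nat.le_succ n)
    have hsplit : Finset.Ioc 0 ((n + 1) * L) =
        Finset.Ioc 0 (n * L) ∪ Finset.Ioc (n * L) ((n + 1) * L) :=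
      (Finset.Ioc_union_Ioc_eq_Ioc (Nat.zero_le _) hle).symm
    have hdisj : Disjoint (Finset.Ioc 0 (n * L)) (Finset.Ioc (n * L) ((n + 1) * L)) := by
      rw [Finset.disjoint_left]
      intro a ha hb
      exact absurd (Finset.mem_Ioc.1 hb).1 (not_lt.2 (Finset.mem_Ioc.1 ha).2)
    rw [hsplit, Finset.filter_union,
      Finset.card_union_of_disjoint (Finset.disjoint_filter_filter hdisj), ih]
    have h2 : Finset.Ioc (n * L) ((n + 1) * L) =
        (Finset.Ioc 0 L).map (addLeftEmbedding (n * L)) := by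
      rw [Finset.map_add_left_Ioc, add_zero, add_one_mul]
    rw [h2, Finset.filter_map, Finset.card_map]
    have h3 : (Finset.Ioc 0 L).filter (P ∘ addLeftEmbedding (n * L)) =
        (Finset.Ioc 0 L).filter P := by
      apply Finset.filter_congr
      intro x _
      simpa using key n x
    rw [h3]; ring

theorem count_extend_by_prime_square (p : ℕ) (hp : p.Prime) (L A : ℕ)
    (hL : L = (Finset.Icc 1 (p ^ 2 - 1)).lcm id)
    (hA : A = ((Finset.Icc 1 L).filter
      (fun x => ((Finset.Ioo 1 (p ^ 2)).filter (fun d => d ∣ x)).card = 1)).card) :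
    (Finset.Icc 1 (p ^ 2)).lcm id = p * L ∧
    ((Finset.Icc 1 (p * L)).filter
        (fun x => ((Finset.Ioc 1 (p ^ 2)).filter (fun d => d ∣ x)).card = 1)).card =
      p * A - Nat.totient L / (p - 1) := by
  have hp2 : 2 ≤ p := hp.two_le
  have hpsq : p + 1 ≤ p ^ 2 := by nlinarith
  have hple : p ≤ p ^ 2 - 1 := by omega
  have hp1 : (1:ℕ) < p ^ 2 := by omega
  have hmemp : p ∈ Finset.Icc 1 (p ^ 2 - 1) := Finset.mem_Icc.2 ⟨hp.one_lt.le, hple⟩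
  -- L ≠ 0
  have hL0 : L ≠ 0 := by
    rw [hL, Ne, Finset.lcm_eq_zero_iff]
    rintro ⟨n, hn, rfl⟩
    simp only [Finset.coe_Icc, Set.mem_Icc, Finset.mem_Icc] at hn
    omega
  have hpL : p ∣ L := hL ▸ Finset.dvd_lcm hmemp
  -- p² ∤ L
  have hp2L : ¬ p ^ 2 ∣ L := by
    intro h
    obtain ⟨n, hn, hdn⟩ := pow_dvd_flcm hp two_ne_zero _
      (fun n hn => by simp only [Finset.mem_Icc] at hn; omega) (hL ▸ h)
    simp only [Finset.mem_Icc] at hn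
    have : p ^ 2 ≤ n := Nat.le_of_dvd (by omega) hdn
    omega
  -- every d with 1 < d < p² divides L
  have hdvdL : ∀ d : ℕ, 1 < d → d < p ^ 2 → d ∣ L := by
    intro d h1 h2
    exact hL ▸ Finset.dvd_lcm (Finset.mem_Icc.2 ⟨by omega, by omega⟩)
  -- prime divisors of L are < p²
  have hqlt : ∀ q : ℕ, q.Prime → q ∣ L → q < p ^ 2 := by
    intro q hq hdq
    obtain ⟨n, hn, hdn⟩ := pow_dvd_flcm hq one_ne_zero _
      (fun n hn => by simp only [Finset.mem_Icc] at hn; omega) (hL ▸ (pow_one q ▸ hdq))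
    simp only [Finset.mem_Icc, pow_one] at hn hdn
    have : q ≤ n := Nat.le_of_dvd (by omega) hdn
    omega
  set M := L / p with hMdef
  have hLM : L = p * M := (Nat.mul_div_cancel' hpL).symm
  have hpM : ¬ p ∣ M := by
    intro h
    exact hp2L (by rw [hLM, pow_two]; exact mul_dvd_mul_left p h)
  have hM0 : M ≠ 0 := by rintro h; rw [h, mul_zero] at hLM; exact hL0 hLM
  have hcopM : Nat.Coprime p M := (Nat.Prime.coprime_iff_not_dvd hp).2 hpM
  -- small primes other than p divide M
  have hqM : ∀ q : ℕ, q.Prime → q < p ^ 2 → q ≠ p → q ∣ M := by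
    intro q hq hlt hne
    have hqL : q ∣ L := hdvdL q hq.one_lt hlt
    rw [hLM] at hqL
    exact (Nat.Coprime.dvd_of_dvd_mul_left
      ((Nat.coprime_primes hq hp).2 hne) hqL)
  -- Part 1
  have part1 : (Finset.Icc 1 (p ^ 2)).lcm id = p * L := by
    have hins : Finset.Icc 1 (p ^ 2) = insert (p ^ 2) (Finset.Icc 1 (p ^ 2 - 1)) := by
      ext x
      simp only [Finset.mem_Icc, Finset.mem_insert]
      omega
    rw [hins, Finset.lcm_insert, ← hL]
    show Nat.lcm (p ^ 2) L = p * L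
    have hgcd : Nat.gcd (p ^ 2) L = p := by
      rw [hLM, pow_two, Nat.gcd_mul_left, hcopM, mul_one]
    rw [Nat.lcm, hgcd, pow_two, mul_assoc, Nat.mul_div_cancel_left _ hp.pos]
  refine ⟨part1, ?_⟩
  -- periodicity of the inner predicate
  set P : ℕ → Prop := fun x => ((Finset.Ioo 1 (p ^ 2)).filter (fun d => d ∣ x)).card = 1
    with hPdef
  have hPper : ∀ x, P (x + L) ↔ P x := by
    intro x
    have : (Finset.Ioo 1 (p ^ 2)).filter (fun d => d ∣ x + L) =
        (Finset.Ioo 1 (p ^ 2)).filter (fun d => d ∣ x) := by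
      apply Finset.filter_congr
      intro d hd
      simp only [Finset.mem_Ioo] at hd
      have hdL : d ∣ L := hdvdL d hd.1 hd.2
      constructor
      · intro h; have := Nat.dvd_sub h hdL; simpa using this
      · intro h; exact Nat.dvd_add h hdL
    simp only [hPdef, this]
  -- Step A : count over [1, pL] of P equals p * A
  have stepA : ((Finset.Icc 1 (p * L)).filter P).card = p * A := by
    have e1 : Finset.Icc 1 (p * L) = Finset.Ioc 0 (p * L) := by
      ext x; simp [Finset.mem_Icc, Finset.mem_Ioc]; omega
    have e2 : Finset.Icc 1 L = Finset.Ioc 0 L := by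
      ext x; simp [Finset.mem_Icc, Finset.mem_Ioc]; omega
    rw [e1, periodic_count L P hPper p, hA, e2]
  -- the special set: P x and p² ∣ x
  have stepD : (((Finset.Icc 1 (p * L)).filter P).filter (fun x => p ^ 2 ∣ x)).card
      = Nat.totient M := by
    have hplt : p < p ^ 2 := by nlinarith
    have hp2pos : 0 < p ^ 2 := by positivity
    have hpLM : p * L = p ^ 2 * M := by rw [hLM]; ring
    have htot2 : ((Finset.Icc 1 M).filter (fun y => Nat.Coprime M y)).card
        = Nat.totient M := by
      have he : Finset.Icc 1 M = Finset.Ico 1 (1 + M) := by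
        ext x; simp only [Finset.mem_Icc, Finset.mem_Ico]; omega
      rw [he]
      exact Nat.filter_coprime_Ico_eq_totient M 1
    rw [Finset.filter_filter, ← htot2]
    refine Finset.card_bij' (fun x _ => x / p ^ 2) (fun y _ => p ^ 2 * y)
      ?_ ?_ ?_ ?_
    · -- forward membership
      intro x hx
      simp only [Finset.mem_filter, Finset.mem_Icc] at hx
      obtain ⟨⟨hx1, hx2⟩, hxP, hxd⟩ := hx
      have hxpos : 0 < x := by omega
      have hp2lex : p ^ 2 ≤ x := Nat.le_of_dvd hxpos hxd
      have hy1 : 1 ≤ x / p ^ 2 := (Nat.one_le_div_iff hp2pos).2 hp2lex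
      have hy2 : x / p ^ 2 ≤ M := by
        have := Nat.div_le_div_right (c := p ^ 2) hx2
        rwa [hpLM, Nat.mul_div_cancel_left M hp2pos] at this
      -- uniqueness of divisor p
      obtain ⟨a, ha⟩ := Finset.card_eq_one.mp hxP
      have hpmem : p ∈ (Finset.Ioo 1 (p ^ 2)).filter (fun d => d ∣ x) :=
        Finset.mem_filter.2 ⟨Finset.mem_Ioo.2 ⟨hp.one_lt, hplt⟩,
          dvd_trans (dvd_pow_self p two_ne_zero) hxd⟩
      rw [ha, Finset.mem_singleton] at hpmem
      subst hpmem
      have huniq : ∀ d : ℕ, 1 < d → d < p ^ 2 → d ∣ x → d = p := by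
        intro d h1 h2 h3
        have : d ∈ (Finset.Ioo 1 (p ^ 2)).filter (fun e => e ∣ x) :=
          Finset.mem_filter.2 ⟨Finset.mem_Ioo.2 ⟨h1, h2⟩, h3⟩
        rw [ha, Finset.mem_singleton] at this
        exact this
      refine Finset.mem_filter.2 ⟨Finset.mem_Icc.2 ⟨hy1, hy2⟩, ?_⟩
      by_contra hnc
      obtain ⟨q, hq, hqM2, hqy⟩ := Nat.Prime.not_coprime_iff_dvd.mp hnc
      have hqx : q ∣ x := hqy.trans (Nat.div_dvd_of_dvd hxd)
      have hqltp2 : q < p ^ 2 := hqlt q hq (hqM2.trans ⟨p, by rw [hLM, mul_comm]⟩)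
      have hqep : q = p := huniq q hq.one_lt hqltp2 hqx
      exact hpM (hqep ▸ hqM2)
    · -- backward membership
      intro y hy
      simp only [Finset.mem_filter, Finset.mem_Icc] at hy
      obtain ⟨⟨hy1, hy2⟩, hyc⟩ := hy
      have hx1 : 1 ≤ p ^ 2 * y := le_trans hy1 (Nat.le_mul_of_pos_left y hp2pos)
      have hx2 : p ^ 2 * y ≤ p * L := by
        rw [hpLM]
        exact Nat.mul_le_mul_left _ hy2
      have hsing : (Finset.Ioo 1 (p ^ 2)).filter (fun d => d ∣ p ^ 2 * y) = {p} := by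
        ext d
        simp only [Finset.mem_filter, Finset.mem_Ioo, Finset.mem_singleton]
        constructor
        · rintro ⟨⟨h1, h2⟩, h3⟩
          have hd0 : d ≠ 0 := by omega
          have hall : ∀ q : ℕ, q.Prime → q ∣ d → q = p := by
            intro q hq hqd
            by_contra hne
            have hqx : q ∣ p ^ 2 * y := hqd.trans h3
            have hqnp2 : ¬ q ∣ p ^ 2 := by
              intro hc
              exact hne ((Nat.prime_dvd_prime_iff_eq hq hp).mp (hq.dvd_of_dvd_pow hc))
            have hqy : q ∣ y :=
              (Nat.Coprime.dvd_of_dvd_mul_left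
                ((Nat.Prime.coprime_iff_not_dvd hq).2 hqnp2) hqx)
            have hqltd : q < p ^ 2 := lt_of_le_of_lt (Nat.le_of_dvd (by omega) hqd) h2
            have hqM2 : q ∣ M := hqM q hq hqltd hne
            have : q ∣ Nat.gcd M y := Nat.dvd_gcd hqM2 hqy
            rw [Nat.Coprime.gcd_eq_one hyc] at this
            exact hq.one_lt.ne' (Nat.dvd_one.mp this)
          have hdpow := Nat.eq_prime_pow_of_unique_prime_dvd hd0
            (fun {q} hq hqd => hall q hq hqd)
          set k := d.primeFactorsList.length with hk
          have hk1 : 1 ≤ k := by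
            by_contra hc
            push_neg at hc
            interval_cases k
            · simp at hdpow; omega
          have hk2 : k < 2 := by
            by_contra hc
            push_neg at hc
            have : p ^ 2 ≤ p ^ k := Nat.pow_le_pow_right hp.pos hc
            omega
          have : k = 1 := by omega
          rw [hdpow, this, pow_one]
        · intro hd
          subst d
          exact ⟨⟨hp.one_lt, hplt⟩, Dvd.dvd.mul_right (dvd_pow_self p two_ne_zero) y⟩
      refine Finset.mem_filter.2 ⟨Finset.mem_Icc.2 ⟨hx1, hx2⟩, ?_, Dvd.intro y rfl⟩
      show ((Finset.Ioo 1 (p ^ 2)).filter (fun d => d ∣ p ^ 2 * y)).card = 1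
      rw [hsing, Finset.card_singleton]
    · intro x hx
      simp only [Finset.mem_filter] at hx
      exact Nat.mul_div_cancel' hx.2.2
    · intro y _
      exact Nat.mul_div_cancel_left y hp2pos
  -- Step B : the Ioc-filter equals {P and not p²∣x}
  have stepB : (Finset.Icc 1 (p * L)).filter
        (fun x => ((Finset.Ioc 1 (p ^ 2)).filter (fun d => d ∣ x)).card = 1) =
      ((Finset.Icc 1 (p * L)).filter P).filter (fun x => ¬ p ^ 2 ∣ x) := by
    rw [Finset.filter_filter]
    apply Finset.filter_congr
    intro x hx
    simp only [Finset.mem_Icc] at hx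
    have hplt : p < p ^ 2 := by nlinarith
    have hIoc : insert (p ^ 2) (Finset.Ioo 1 (p ^ 2)) = Finset.Ioc 1 (p ^ 2) :=
      Finset.Ioo_insert_right hp1
    by_cases hdvd : p ^ 2 ∣ x
    · constructor
      · intro h
        exfalso
        obtain ⟨a, ha⟩ := Finset.card_eq_one.mp h
        have hpmem : p ∈ (Finset.Ioc 1 (p ^ 2)).filter (fun d => d ∣ x) :=
          Finset.mem_filter.2 ⟨Finset.mem_Ioc.2 ⟨hp.one_lt, hplt.le⟩,
            dvd_trans (dvd_pow_self p two_ne_zero) hdvd⟩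
        have hp2mem : p ^ 2 ∈ (Finset.Ioc 1 (p ^ 2)).filter (fun d => d ∣ x) :=
          Finset.mem_filter.2 ⟨Finset.mem_Ioc.2 ⟨hp1, le_refl _⟩, hdvd⟩
        rw [ha, Finset.mem_singleton] at hpmem hp2mem
        omega
      · rintro ⟨_, h2⟩
        exact absurd hdvd h2
    · have heq : (Finset.Ioc 1 (p ^ 2)).filter (fun d => d ∣ x) =
          (Finset.Ioo 1 (p ^ 2)).filter (fun d => d ∣ x) := by
        rw [← hIoc, Finset.filter_insert, if_neg hdvd]
      rw [heq]
      simp only [hPdef]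
      tauto
  -- totient identity
  have htot : Nat.totient L / (p - 1) = Nat.totient M := by
    rw [hLM, Nat.totient_mul hcopM, Nat.totient_prime hp, Nat.mul_div_cancel_left _ (by omega)]
  rw [stepB, htot, ← stepA, ← stepD]
  have := Finset.card_filter_add_card_filter_not
    (s := (Finset.Icc 1 (p * L)).filter P) (fun x => p ^ 2 ∣ x)
  omega
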